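/- (Generalized Composition Formula.) Fix λ ∈ ℝ and functions f : ℕ → ℝ and g : ℕ → ℝ with g(0) = 1. Define h : ℕ → ℝ by h(0) = 1 and, for n > 0, h(n) = Σ_{k=1}^{n} Σ λ^{(#B₁ + ⋯ + #B_k) − n} · f(#B₁) ⋯ f(#B_k) · g(k), where the inner sum is over all generalized partitions (B₁,…,B_k) of [n] with k blocks. Then for every n ∈ ℕ, h(n) = Σ_{k=0}^{n} g(k) · f^{[k]}(n). -/

import Mathlib

/-- The weight-`lam` product on functions `ℕ → ℝ`. -/
noncomputable def starMul (lam : ℝ) (a b : ℕ → ℝ) : ℕ → ℝ := fun u =>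
  ∑ p ∈ Finset.HasAntidiagonal.antidiagonal u, ∑ q ∈ Finset.HasAntidiagonal.antidiagonal p.2,
    lam ^ p.1 * ((Nat.factorial u : ℝ) /
      ((Nat.factorial p.1 : ℝ) * (Nat.factorial q.1 : ℝ) * (Nat.factorial q.2 : ℝ))) *
      a (p.1 + q.1) * b (p.1 + q.2)

/-- `δ_k : ℕ → ℝ`. -/
noncomputable def delta (k : ℕ) : ℕ → ℝ := fun m => if m = k then 1 else 0

/-- The shift operator `d`: `d(a)(n) = a(n+1)`. -/
noncomputable def dOp (a : ℕ → ℝ) : ℕ → ℝ := fun n => a (n + 1)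

/-- The shift operator `P`: `P(a)(0) = 0` and `P(a)(n) = a(n−1)` for `n ≥ 1`. -/
noncomputable def pOp (a : ℕ → ℝ) : ℕ → ℝ := fun n =>
  match n with
  | 0 => 0
  | m + 1 => a m

/-- The divided powers: `f^{[0]} = δ₀` and `f^{[k]} = P(f^{[k−1]} ⋆ d(f))` for `k ≥ 1`. -/
noncomputable def divPow (lam : ℝ) (f : ℕ → ℝ) : ℕ → ℕ → ℝ
  | 0 => delta 0
  | k + 1 => pOp (starMul lam (divPow lam f k) (dOp f))

noncomputable def Wt (lam : ℝ) (f : ℕ → ℝ) {n : ℕ} (k : ℕ) (S : Finset (Fin n)) : ℝ :=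
  ∑ B ∈ Finset.univ.filter (fun B : Fin k → Finset (Fin n) =>
      (∀ i, (B i).Nonempty) ∧ Finset.univ.biUnion B = S ∧
      ∀ i j : Fin k, i < j → (B i).max < (B j).max),
    lam ^ ((∑ i, (B i).card) - S.card) * ∏ i, f ((B i).card)

lemma sum_powerset_card' {α : Type*} [DecidableEq α] (T : Finset α) (G : ℕ → ℝ) :
    ∑ A ∈ T.powerset, G A.card
      = ∑ a ∈ Finset.range (T.card + 1), (T.card.choose a : ℝ) * G a := by
  rw [Finset.sum_powerset]
  refine Finset.sum_congr rfl fun a _ => ?_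
  rw [Finset.sum_powersetCard a T G, nsmul_eq_mul]

lemma choose_mul_cast (m a d : ℕ) (h1 : a ≤ m) (h2 : d ≤ a) :
    (m.choose a : ℝ) * (a.choose d : ℝ)
      = (m.factorial : ℝ) /
        ((d.factorial : ℝ) * ((m - a).factorial : ℝ) * ((a - d).factorial : ℝ)) := by
  have e1 := Nat.choose_mul_factorial_mul_factorial h1
  have e2 := Nat.choose_mul_factorial_mul_factorial h2
  have key : m.choose a * a.choose d *
      (d.factorial * (m - a).factorial * (a - d).factorial) = m.factorial := by
    rw [← e1, ← e2]; ring
  rw [eq_div_iff (by positivity)]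
  exact_mod_cast congrArg (Nat.cast : ℕ → ℝ) key

lemma starMul_formula (lam : ℝ) (f : ℕ → ℝ) (k m : ℕ) :
    divPow lam f (k + 1) (m + 1)
      = ∑ a ∈ Finset.range (m + 1), (m.choose a : ℝ) *
          ∑ d ∈ Finset.range (a + 1), (a.choose d : ℝ) *
            (lam ^ d * f (a + 1) * divPow lam f k (m - a + d)) := by
  show starMul lam (divPow lam f k) (dOp f) m = _
  rw [starMul]
  rw [Finset.Nat.sum_antidiagonal_eq_sum_range_succ_mk]
  simp only [Finset.Nat.sum_antidiagonal_eq_sum_range_succ_mk]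
  simp only [Finset.mul_sum]
  rw [Finset.sum_sigma', Finset.sum_sigma']
  refine Finset.sum_nbij' (fun x => ⟨m - x.2, x.1⟩) (fun y => ⟨y.2, m - y.1⟩) ?_ ?_ ?_ ?_ ?_
  · rintro ⟨d, q⟩ hx
    simp only [Finset.mem_sigma, Finset.mem_range] at hx ⊢
    omega
  · rintro ⟨a, d⟩ hy
    simp only [Finset.mem_sigma, Finset.mem_range] at hy ⊢
    omega
  · rintro ⟨d, q⟩ hx
    obtain ⟨hx1, hx2⟩ := Finset.mem_sigma.mp hx
    rw [Finset.mem_range] at hx1 hx2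
    dsimp only at hx1 hx2 ⊢
    have : m - (m - q) = q := by omega
    rw [this]
  · rintro ⟨a, d⟩ hy
    obtain ⟨hy1, hy2⟩ := Finset.mem_sigma.mp hy
    rw [Finset.mem_range] at hy1 hy2
    dsimp only at hy1 hy2 ⊢
    have : m - (m - a) = a := by omega
    rw [this]
  · rintro ⟨d, q⟩ hx
    obtain ⟨hx1, hx2⟩ := Finset.mem_sigma.mp hx
    rw [Finset.mem_range] at hx1 hx2
    dsimp only at hx1 hx2 ⊢
    have h1 : m - q ≤ m := Nat.sub_le _ _
    have h2 : d ≤ m - q := by omega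
    rw [← mul_assoc ((m.choose (m-q) : ℕ) : ℝ), choose_mul_cast m (m - q) d h1 h2]
    have e1 : m - (m - q) = q := by omega
    have e2 : m - q - d = m - d - q := by omega
    have e4 : d + (m - d - q) + 1 = m - q + 1 := by omega
    rw [e1, e2]
    rw [dOp]
    rw [e4, Nat.add_comm q d]
    ring
lemma Wt_zero (lam : ℝ) (f : ℕ → ℝ) {n : ℕ} (S : Finset (Fin n)) :
    Wt lam f 0 S = if S = ∅ then 1 else 0 := by
  rw [Wt]
  rcases eq_or_ne S ∅ with rfl | hne
  · rw [if_pos rfl]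
    rw [Finset.filter_true_of_mem (fun B _ => ⟨fun i => i.elim0, by simp, fun i j _ => i.elim0⟩)]
    simp
  · rw [if_neg hne]
    rw [Finset.filter_false_of_mem, Finset.sum_empty]
    intro B _ hB
    refine hne ?_
    rw [← hB.2.1]
    simp

lemma Wt_empty (lam : ℝ) (f : ℕ → ℝ) {n : ℕ} (k : ℕ) :
    Wt lam f (k + 1) (∅ : Finset (Fin n)) = 0 := by
  rw [Wt, Finset.filter_false_of_mem, Finset.sum_empty]
  intro B _ hB
  have h0 := hB.1 0
  have : B 0 ⊆ ∅ := by
    rw [← hB.2.1]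
    exact Finset.subset_biUnion_of_mem B (Finset.mem_univ 0)
  rw [Finset.subset_empty] at this
  exact h0.ne_empty this
lemma biUnion_snoc {n k : ℕ} (B' : Fin k → Finset (Fin n)) (L : Finset (Fin n)) :
    Finset.univ.biUnion (Fin.snoc B' L : Fin (k + 1) → Finset (Fin n))
      = Finset.univ.biUnion B' ∪ L := by
  ext x
  simp only [Finset.mem_biUnion, Finset.mem_union, Finset.mem_univ, true_and]
  constructor
  · rintro ⟨i, hi⟩
    rcases Fin.eq_castSucc_or_eq_last i with ⟨j, rfl⟩ | rfl
    · exact Or.inl ⟨j, by rwa [Fin.snoc_castSucc] at hi⟩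
    · exact Or.inr (by rwa [Fin.snoc_last] at hi)
  · rintro (⟨i, hi⟩ | hx)
    · exact ⟨i.castSucc, by rwa [Fin.snoc_castSucc]⟩
    · exact ⟨Fin.last k, by rwa [Fin.snoc_last]⟩

lemma Wt_succ (lam : ℝ) (f : ℕ → ℝ) {n : ℕ} (k : ℕ) (S : Finset (Fin n)) (hS : S.Nonempty) :
    Wt lam f (k + 1) S =
      ∑ A ∈ (S.erase (S.max' hS)).powerset, ∑ D ∈ A.powerset,
        lam ^ D.card * f (A.card + 1) *
          Wt lam f k (((S.erase (S.max' hS)) \ A) ∪ D) := by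
  classical
  set M := S.max' hS with hMdef
  have hM : M ∈ S := S.max'_mem hS
  have hle : ∀ x ∈ S, x ≤ M := fun x hx => S.le_max' x hx
  set S' := S.erase M with hS'def
  have hMS' : M ∉ S' := Finset.notMem_erase M S
  have hltM : ∀ x ∈ S', x < M := fun x hx =>
    lt_of_le_of_ne (hle x (Finset.mem_of_mem_erase hx)) (Finset.ne_of_mem_erase hx)
  have hinsS : insert M S' = S := Finset.insert_erase hM
  have hScard : S.card = S'.card + 1 := by
    rw [hS'def, Finset.card_erase_of_mem hM]
    have : 1 ≤ S.card := Finset.card_pos.mpr hS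
    omega
  -- abbreviations
  set w : (Fin (k+1) → Finset (Fin n)) → ℝ := fun B =>
    lam ^ ((∑ i, (B i).card) - S.card) * ∏ i, f ((B i).card) with hw
  set P : (Fin (k+1) → Finset (Fin n)) → Prop := fun B =>
    (∀ i, (B i).Nonempty) ∧ Finset.univ.biUnion B = S ∧
      ∀ i j : Fin (k+1), i < j → (B i).max < (B j).max with hP
  have step1 : Wt lam f (k+1) S = ∑ B : Fin (k+1) → Finset (Fin n), if P B then w B else 0 := by
    rw [Wt, Finset.sum_filter]
  rw [step1]
  -- reindex by snoc
  have step2 : (∑ B : Fin (k+1) → Finset (Fin n), if P B then w B else 0)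
      = ∑ p : Finset (Fin n) × (Fin k → Finset (Fin n)),
          if P (Fin.snoc p.2 p.1) then w (Fin.snoc p.2 p.1) else 0 :=
    (Fintype.sum_equiv (Fin.snocEquiv fun _ => Finset (Fin n)) _ _ (fun p => rfl)).symm
  rw [step2, Fintype.sum_prod_type]
  -- characterize P ∘ snoc
  have hPiff : ∀ (L : Finset (Fin n)) (B' : Fin k → Finset (Fin n)),
      P (Fin.snoc B' L) ↔ (M ∈ L ∧ L ⊆ S) ∧
        ((∀ i, (B' i).Nonempty) ∧ (Finset.univ.biUnion B' ∪ L = S) ∧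
          (∀ i, M ∉ B' i) ∧ (∀ i j : Fin k, i < j → (B' i).max < (B' j).max)) := by
    intro L B'
    constructor
    · rintro ⟨h1, h2, h3⟩
      rw [biUnion_snoc] at h2
      have hLS : L ⊆ S := h2 ▸ Finset.subset_union_right
      have hBS : ∀ i, B' i ⊆ S := fun i =>
        h2 ▸ (Finset.subset_biUnion_of_mem B' (Finset.mem_univ i)).trans Finset.subset_union_left
      have hLne : L.Nonempty := by
        have := h1 (Fin.last k); rwa [Fin.snoc_last] at this
      have hLmax : L.max ≤ (M : WithBot (Fin n)) := by
        rw [← Finset.coe_max' hLne]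
        exact WithBot.coe_le_coe.mpr (Finset.max'_le L hLne M fun y hy => hle y (hLS hy))
      have hMnB : ∀ i, M ∉ B' i := by
        intro i hMB
        have hlt := h3 i.castSucc (Fin.last k) (Fin.castSucc_lt_last i)
        rw [Fin.snoc_castSucc, Fin.snoc_last] at hlt
        exact absurd ((Finset.le_max hMB).trans_lt (hlt.trans_le hLmax)) (lt_irrefl _)
      have hML : M ∈ L := by
        have : M ∈ Finset.univ.biUnion B' ∪ L := h2.symm ▸ hM
        rcases Finset.mem_union.mp this with hu | hL
        · obtain ⟨i, _, hi⟩ := Finset.mem_biUnion.mp hu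
          exact absurd hi (hMnB i)
        · exact hL
      refine ⟨⟨hML, hLS⟩, ?_, h2, hMnB, ?_⟩
      · intro i
        have := h1 i.castSucc; rwa [Fin.snoc_castSucc] at this
      · intro i j hij
        have := h3 i.castSucc j.castSucc (Fin.castSucc_lt_castSucc_iff.mpr hij)
        rwa [Fin.snoc_castSucc, Fin.snoc_castSucc] at this
    · rintro ⟨⟨hML, hLS⟩, hne, hun, hMnB, hmax⟩
      have hBS : ∀ i, B' i ⊆ S := fun i =>
        hun ▸ (Finset.subset_biUnion_of_mem B' (Finset.mem_univ i)).trans Finset.subset_union_left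
      have hLne : L.Nonempty := ⟨M, hML⟩
      have hLmax : L.max = (M : WithBot (Fin n)) := by
        rw [← Finset.coe_max' hLne]
        have h1 : L.max' hLne ≤ M := Finset.max'_le L hLne M fun y hy => hle y (hLS hy)
        have h2 : M ≤ L.max' hLne := Finset.le_max' L M hML
        rw [le_antisymm h1 h2]
      have hBmax : ∀ i, (B' i).max < (M : WithBot (Fin n)) := by
        intro i
        rw [← Finset.coe_max' (hne i)]
        refine WithBot.coe_lt_coe.mpr ?_
        have hmem := (B' i).max'_mem (hne i)
        exact lt_of_le_of_ne (hle _ (hBS i hmem)) (fun hEq => hMnB i (hEq ▸ hmem))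
      refine ⟨?_, ?_, ?_⟩
      · intro i
        rcases Fin.eq_castSucc_or_eq_last i with ⟨j, rfl⟩ | rfl
        · rw [Fin.snoc_castSucc]; exact hne j
        · rw [Fin.snoc_last]; exact hLne
      · rw [biUnion_snoc]; exact hun
      · intro i j hij
        rcases Fin.eq_castSucc_or_eq_last j with ⟨j', rfl⟩ | rfl
        · have hine : i ≠ Fin.last k := ne_of_lt (hij.trans (Fin.castSucc_lt_last j'))
          obtain ⟨i', rfl⟩ := (Fin.eq_castSucc_or_eq_last i).resolve_right hine
          rw [Fin.snoc_castSucc, Fin.snoc_castSucc]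
          exact hmax i' j' (Fin.castSucc_lt_castSucc_iff.mp hij)
        · have hine : i ≠ Fin.last k := ne_of_lt hij
          obtain ⟨i', rfl⟩ := (Fin.eq_castSucc_or_eq_last i).resolve_right hine
          rw [Fin.snoc_castSucc, Fin.snoc_last, hLmax]
          exact hBmax i'
  -- rewrite summand via hPiff
  have step3 : ∀ (L : Finset (Fin n)) (B' : Fin k → Finset (Fin n)),
      (if P (Fin.snoc B' L) then w (Fin.snoc B' L) else 0)
        = if (M ∈ L ∧ L ⊆ S) then
            (if ((∀ i, (B' i).Nonempty) ∧ (Finset.univ.biUnion B' ∪ L = S) ∧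
                (∀ i, M ∉ B' i) ∧ (∀ i j : Fin k, i < j → (B' i).max < (B' j).max))
              then w (Fin.snoc B' L) else 0) else 0 := by
    intro L B'
    rw [if_congr (hPiff L B') rfl rfl, ite_and]
  simp only [step3]
  have step4 : ∀ L : Finset (Fin n),
      (∑ B' : Fin k → Finset (Fin n), if (M ∈ L ∧ L ⊆ S) then
          (if ((∀ i, (B' i).Nonempty) ∧ (Finset.univ.biUnion B' ∪ L = S) ∧
              (∀ i, M ∉ B' i) ∧ (∀ i j : Fin k, i < j → (B' i).max < (B' j).max))
            then w (Fin.snoc B' L) else 0) else 0)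
        = if (M ∈ L ∧ L ⊆ S) then
            (∑ B' : Fin k → Finset (Fin n),
              if ((∀ i, (B' i).Nonempty) ∧ (Finset.univ.biUnion B' ∪ L = S) ∧
                  (∀ i, M ∉ B' i) ∧ (∀ i j : Fin k, i < j → (B' i).max < (B' j).max))
                then w (Fin.snoc B' L) else 0) else 0 := by
    intro L; split_ifs <;> simp
  simp only [step4]
  rw [← Finset.sum_filter]
  refine Finset.sum_nbij' (fun L => L.erase M) (fun A => insert M A) ?_ ?_ ?_ ?_ ?_
  · intro L hL
    rw [Finset.mem_filter] at hL
    exact Finset.mem_powerset.mpr (Finset.erase_subset_erase M hL.2.2)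
  · intro A hA
    rw [Finset.mem_powerset] at hA
    rw [Finset.mem_filter]
    exact ⟨Finset.mem_univ _, Finset.mem_insert_self M A,
      Finset.insert_subset hM (hA.trans (Finset.erase_subset M S))⟩
  · intro L hL
    rw [Finset.mem_filter] at hL
    exact Finset.insert_erase hL.2.1
  · intro A hA
    rw [Finset.mem_powerset] at hA
    exact Finset.erase_insert (fun hMA => hMS' (hA hMA))
  · intro L hL
    rw [Finset.mem_filter] at hL
    obtain ⟨-, hML, hLS⟩ := hL
    set A := L.erase M with hAdef
    have hAS' : A ⊆ S' := Finset.erase_subset_erase M hLS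
    have hMA : M ∉ A := Finset.notMem_erase M L
    have hLA : L = insert M A := (Finset.insert_erase hML).symm
    have hAcard : L.card = A.card + 1 := by
      rw [hLA, Finset.card_insert_of_notMem hMA]
    -- fiberwise decomposition over D = A ∩ biUnion B'
    rw [← Finset.sum_fiberwise_of_maps_to
      (g := fun B' : Fin k → Finset (Fin n) => A ∩ Finset.univ.biUnion B')
      (t := A.powerset) (fun B' _ => Finset.mem_powerset.mpr Finset.inter_subset_left)]
    refine Finset.sum_congr rfl fun D hD => ?_
    rw [Finset.mem_powerset] at hD
    set C : Finset (Fin n) := (S' \ A) ∪ D with hCdef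
    have hCS' : C ⊆ S' := Finset.union_subset (Finset.sdiff_subset) (hD.trans hAS')
    have hCcard : C.card = S'.card - A.card + D.card := by
      rw [hCdef, Finset.card_union_of_disjoint (Finset.sdiff_disjoint.mono_right hD),
        Finset.card_sdiff_of_subset hAS']
    -- the inner sum equals lam^|D| * f(|A|+1) * Wt k C
    rw [Finset.sum_filter]
    have key : ∀ B' : Fin k → Finset (Fin n),
        (if (A ∩ Finset.univ.biUnion B' = D) then
          (if ((∀ i, (B' i).Nonempty) ∧ (Finset.univ.biUnion B' ∪ L = S) ∧
              (∀ i, M ∉ B' i) ∧ (∀ i j : Fin k, i < j → (B' i).max < (B' j).max))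
            then w (Fin.snoc B' L) else 0) else 0)
        = if ((∀ i, (B' i).Nonempty) ∧ Finset.univ.biUnion B' = C ∧
              (∀ i j : Fin k, i < j → (B' i).max < (B' j).max))
            then lam ^ D.card * f (A.card + 1) *
              (lam ^ ((∑ i, (B' i).card) - C.card) * ∏ i, f ((B' i).card)) else 0 := by
      intro B'
      rw [← ite_and]
      set U := Finset.univ.biUnion B' with hUdef
      have hiff : (A ∩ U = D ∧ (∀ i, (B' i).Nonempty) ∧ (U ∪ L = S) ∧
            (∀ i, M ∉ B' i) ∧ (∀ i j : Fin k, i < j → (B' i).max < (B' j).max))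
          ↔ ((∀ i, (B' i).Nonempty) ∧ U = C ∧
            (∀ i j : Fin k, i < j → (B' i).max < (B' j).max)) := by
        constructor
        · rintro ⟨hAU, hne, hUL, hMnB, hmax⟩
          have hMU : M ∉ U := by
            intro hMU
            obtain ⟨i, -, hi⟩ := Finset.mem_biUnion.mp hMU
            exact hMnB i hi
          have hUS' : U ⊆ S' := by
            intro x hx
            have hxS : x ∈ S := hUL ▸ Finset.mem_union_left L hx
            exact Finset.mem_erase.mpr ⟨fun hEq => hMU (hEq ▸ hx), hxS⟩
          refine ⟨hne, ?_, hmax⟩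
          apply Finset.Subset.antisymm
          · intro x hx
            by_cases hxA : x ∈ A
            · exact Finset.mem_union_right _ (hAU ▸ Finset.mem_inter.mpr ⟨hxA, hx⟩)
            · exact Finset.mem_union_left _ (Finset.mem_sdiff.mpr ⟨hUS' hx, hxA⟩)
          · apply Finset.union_subset
            · intro x hx
              rw [Finset.mem_sdiff] at hx
              have hxS : x ∈ S := Finset.mem_of_mem_erase hx.1
              have : x ∈ U ∪ L := hUL.symm ▸ hxS
              rcases Finset.mem_union.mp this with h | h
              · exact h
              · rw [hLA] at h
                rcases Finset.mem_insert.mp h with rfl | h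
                · exact absurd hx.1 hMS'
                · exact absurd h hx.2
            · exact hAU ▸ Finset.inter_subset_right
        · rintro ⟨hne, hUC, hmax⟩
          have hMU : M ∉ U := fun hMU => hMS' (hCS' (hUC ▸ hMU))
          refine ⟨?_, hne, ?_, ?_, hmax⟩
          · rw [hUC, hCdef, Finset.inter_union_distrib_left, Finset.inter_sdiff_self,
              Finset.empty_union, Finset.inter_eq_right.mpr hD]
          · rw [hUC, hCdef, hLA, Finset.union_insert, Finset.union_assoc,
              Finset.union_eq_right.mpr hD, Finset.sdiff_union_self_eq_union,
              Finset.union_eq_left.mpr hAS', hinsS]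
          · intro i hMB
            exact hMU (Finset.mem_biUnion.mpr ⟨i, Finset.mem_univ i, hMB⟩)
      rw [if_congr hiff rfl rfl]
      by_cases hQ : ((∀ i, (B' i).Nonempty) ∧ U = C ∧
          (∀ i j : Fin k, i < j → (B' i).max < (B' j).max))
      · rw [if_pos hQ, if_pos hQ]
        have hsum : ∑ i : Fin (k+1), ((Fin.snoc B' L : Fin (k+1) → Finset (Fin n)) i).card
            = (∑ i : Fin k, (B' i).card) + L.card := by
          rw [Fin.sum_univ_castSucc]
          simp [Fin.snoc_castSucc, Fin.snoc_last]
        have hprod : ∏ i : Fin (k+1), f (((Fin.snoc B' L : Fin (k+1) → Finset (Fin n)) i).card)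
            = (∏ i : Fin k, f ((B' i).card)) * f L.card := by
          rw [Fin.prod_univ_castSucc]
          simp [Fin.snoc_castSucc, Fin.snoc_last]
        have hge : C.card ≤ ∑ i : Fin k, (B' i).card := by
          rw [← hQ.2.1, hUdef]
          exact Finset.card_biUnion_le
        have hAle : A.card ≤ S'.card := Finset.card_le_card hAS'
        have hDle : D.card ≤ A.card := Finset.card_le_card hD
        have hexp : (∑ i : Fin (k+1), ((Fin.snoc B' L : Fin (k+1) → Finset (Fin n)) i).card)
              - S.card
            = D.card + ((∑ i : Fin k, (B' i).card) - C.card) := by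
          rw [hsum]
          omega
        rw [hw]
        dsimp only
        rw [hexp, hprod, hAcard, pow_add]
        ring
      · rw [if_neg hQ, if_neg hQ]
    simp only [key]
    rw [Wt, Finset.sum_filter, Finset.mul_sum]
    simp only [mul_ite, mul_zero]

lemma Wt_eq_divPow (lam : ℝ) (f : ℕ → ℝ) : ∀ (k : ℕ) {n : ℕ} (S : Finset (Fin n)),
    Wt lam f k S = divPow lam f k S.card := by
  intro k
  induction k with
  | zero =>
    intro n S
    rw [Wt_zero]
    simp only [divPow, delta, Finset.card_eq_zero]
  | succ k ih =>
    intro n S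
    rcases S.eq_empty_or_nonempty with rfl | hS
    · rw [Wt_empty]; simp [divPow, pOp, starMul]
    · have hM := S.max'_mem hS
      have hScard : S.card = (S.erase (S.max' hS)).card + 1 := by
        rw [Finset.card_erase_of_mem hM]
        have : 1 ≤ S.card := Finset.card_pos.mpr hS
        omega
      set S' := S.erase (S.max' hS) with hS'def
      rw [Wt_succ lam f k S hS]
      have inner : ∀ A ∈ S'.powerset,
          (∑ D ∈ A.powerset, lam ^ D.card * f (A.card + 1) * Wt lam f k ((S' \ A) ∪ D))
            = ∑ d ∈ Finset.range (A.card + 1), (A.card.choose d : ℝ) *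
                (lam ^ d * f (A.card + 1) * divPow lam f k (S'.card - A.card + d)) := by
        intro A hA
        rw [Finset.mem_powerset] at hA
        rw [← sum_powerset_card' A
          (fun d => lam ^ d * f (A.card + 1) * divPow lam f k (S'.card - A.card + d))]
        refine Finset.sum_congr rfl fun D hD => ?_
        rw [Finset.mem_powerset] at hD
        have hCcard : ((S' \ A) ∪ D).card = S'.card - A.card + D.card := by
          rw [Finset.card_union_of_disjoint (Finset.sdiff_disjoint.mono_right hD),
            Finset.card_sdiff_of_subset hA]
        rw [ih, hCcard]
      rw [Finset.sum_congr rfl inner]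
      rw [sum_powerset_card' S'
        (fun a => ∑ d ∈ Finset.range (a + 1), (a.choose d : ℝ) *
          (lam ^ d * f (a + 1) * divPow lam f k (S'.card - a + d)))]
      rw [hScard, starMul_formula]


/-- Generalized Composition Formula: if `g(0) = 1`, `h(0) = 1` and for `n > 0`
`h(n) = Σ_{k=1}^{n} Σ lam^{(#B₁+⋯+#B_k)−n} · f(#B₁) ⋯ f(#B_k) · g(k)`, the inner sum
over all generalized partitions `(B₁,…,B_k)` of `[n]` with `k` blocks, then
`h(n) = Σ_{k=0}^{n} g(k) · f^{[k]}(n)` for every `n`. -/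
theorem stmt15 (lam : ℝ) (f g h : ℕ → ℝ) (hg : g 0 = 1) (h0 : h 0 = 1)
    (hh : ∀ n : ℕ, 0 < n → h n =
      ∑ k ∈ Finset.Icc 1 n,
        (∑ B ∈ Finset.univ.filter (fun B : Fin k → Finset (Fin n) =>
            (∀ i, (B i).Nonempty) ∧ Finset.univ.biUnion B = Finset.univ ∧
            ∀ i j : Fin k, i < j → (B i).max < (B j).max),
          lam ^ ((∑ i, (B i).card) - n) * (∏ i, f ((B i).card)) * g k)) :
    ∀ n : ℕ, h n = ∑ k ∈ Finset.range (n + 1), g k * divPow lam f k n := by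
  intro n
  rcases Nat.eq_zero_or_pos n with rfl | hn
  · simp [h0, divPow, delta, hg]
  · rw [hh n hn]
    have hWt : ∀ k : ℕ,
        (∑ B ∈ Finset.univ.filter (fun B : Fin k → Finset (Fin n) =>
            (∀ i, (B i).Nonempty) ∧ Finset.univ.biUnion B = Finset.univ ∧
            ∀ i j : Fin k, i < j → (B i).max < (B j).max),
          lam ^ ((∑ i, (B i).card) - n) * (∏ i, f ((B i).card)) * g k)
          = g k * divPow lam f k n := by
      intro k
      have hcard : (Finset.univ : Finset (Fin n)).card = n := by
        rw [Finset.card_univ, Fintype.card_fin]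
      have hW : Wt lam f k (Finset.univ : Finset (Fin n)) = divPow lam f k n := by
        rw [Wt_eq_divPow, hcard]
      rw [← hW, Wt, hcard, ← Finset.sum_mul, mul_comm]
    rw [Finset.sum_congr rfl fun k _ => hWt k]
    have hsplit : Finset.range (n + 1) = insert 0 (Finset.Icc 1 n) := by
      ext x
      simp only [Finset.mem_range, Finset.mem_insert, Finset.mem_Icc]
      omega
    rw [hsplit, Finset.sum_insert (by simp)]
    have : divPow lam f 0 n = 0 := by
      simp only [divPow, delta]
      rw [if_neg (by omega)]
    rw [this, mul_zero, zero_add]
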